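/- arXiv:1803.03950 — 4 statements merged into one kernel-verified Lean document; each statement's English description precedes it below -/
import Mathlib

section
/- Let d be a positive integer and ε > 0. Every finite graph G on h ≥ 1 vertices with maximum average degree at most d - ε contains a 'special' independent set I: an independent set of size at least εh/d² all of whose vertices have degree at most d - 1 in G. -/
lemma greedy_ind {V : Type*} [Fintype V] [DecidableEq V] (G : SimpleGraph V)
    [DecidableRel G.Adj] (d : ℕ) (hd : 0 < d) :
    ∀ s : Finset V, (∀ v ∈ s, G.degree v ≤ d - 1) →
      ∃ I : Finset V, I ⊆ s ∧ (∀ u ∈ I, ∀ v ∈ I, ¬ G.Adj u v) ∧ s.card ≤ d * I.card := by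
  intro s
  induction s using Finset.strongInduction with
  | _ s ih =>
    intro hdeg
    rcases s.eq_empty_or_nonempty with rfl | ⟨v, hv⟩
    · exact ⟨∅, by simp⟩
    · set t := s \ insert v (G.neighborFinset v) with ht
      have hvt : v ∉ t := by simp [ht]
      have hts : t ⊂ s := by
        refine Finset.ssubset_iff_of_subset (Finset.sdiff_subset) |>.2 ⟨v, hv, hvt⟩
      obtain ⟨I, hIt, hind, hcard⟩ := ih t hts (fun u hu => hdeg u (Finset.sdiff_subset hu))
      have hvI : v ∉ I := fun h => hvt (hIt h)
      refine ⟨insert v I, ?_, ?_, ?_⟩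
      · intro u hu
        rcases Finset.mem_insert.1 hu with rfl | hu
        · exact hv
        · exact Finset.sdiff_subset (hIt hu)
      · have hnadj : ∀ w ∈ I, ¬ G.Adj v w := by
          intro w hw hadj
          have := hIt hw
          simp only [ht, Finset.mem_sdiff, Finset.mem_insert, SimpleGraph.mem_neighborFinset] at this
          exact this.2 (Or.inr hadj)
        intro u hu w hw hadj
        rcases Finset.mem_insert.1 hu with h1 | h1
        · rcases Finset.mem_insert.1 hw with h2 | h2
          · subst h1; subst h2; exact G.loopless.irrefl _ hadj
          · subst h1; exact hnadj w h2 hadj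
        · rcases Finset.mem_insert.1 hw with h2 | h2
          · subst h2; exact hnadj u h1 hadj.symm
          · exact hind u h1 w h2 hadj
      · have h1 : s.card ≤ t.card + (insert v (G.neighborFinset v)).card := by
          calc s.card ≤ (t ∪ insert v (G.neighborFinset v)).card := by
                refine Finset.card_le_card ?_
                intro x hx
                rw [Finset.mem_union, ht, Finset.mem_sdiff]
                by_cases hx2 : x ∈ insert v (G.neighborFinset v)
                · exact Or.inr hx2
                · exact Or.inl ⟨hx, hx2⟩
            _ ≤ t.card + (insert v (G.neighborFinset v)).card := Finset.card_union_le _ _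
        have h3 : (insert v (G.neighborFinset v)).card ≤ d := by
          refine le_trans (Finset.card_insert_le _ _) ?_
          rw [G.card_neighborFinset_eq_degree]
          have hdv := hdeg v hv
          omega
        rw [Finset.card_insert_of_notMem hvI]
        have := hcard
        nlinarith [h1, h3, hcard]

/-- Every finite graph `G` on `h ≥ 1` vertices with maximum average
degree at most `d - ε` (`d` a positive integer, `ε > 0`) contains a special independent
set: an independent set `I` with `|I| ≥ ε·h/d²` all of whose vertices have degree at
most `d - 1` in `G`. -/
theorem stmt2 {V : Type*} [Fintype V] [DecidableEq V] (G : SimpleGraph V)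
    [DecidableRel G.Adj] (d : ℕ) (hd : 0 < d) (ε : ℝ) (hε : 0 < ε)
    (hV : 1 ≤ Fintype.card V)
    (hmad : ∀ H : G.Subgraph, H.verts.Nonempty →
      2 * (H.edgeSet.ncard : ℝ) ≤ ((d : ℝ) - ε) * H.verts.ncard) :
    ∃ I : Finset V,
      (∀ u ∈ I, ∀ v ∈ I, ¬ G.Adj u v) ∧
      (∀ v ∈ I, G.degree v ≤ d - 1) ∧
      ε * (Fintype.card V : ℝ) / (d : ℝ) ^ 2 ≤ (I.card : ℝ) := by
  classical
  set h := Fintype.card V with hh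
  have hne : Nonempty V := Fintype.card_pos_iff.mp hV
  have hmadtop := hmad ⊤ (by simp [Set.univ_nonempty])
  have htopv : ((⊤ : G.Subgraph).verts.ncard : ℝ) = h := by
    simp [SimpleGraph.Subgraph.verts_top, Set.ncard_univ, hh, Nat.card_eq_fintype_card]
  have htope : (⊤ : G.Subgraph).edgeSet.ncard = G.edgeFinset.card := by
    rw [SimpleGraph.Subgraph.edgeSet_top, Set.ncard_eq_toFinset_card']
    congr 1
  have hsum : ∑ v, G.degree v = 2 * G.edgeFinset.card :=
    SimpleGraph.sum_degrees_eq_twice_card_edges G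
  -- sets
  set S : Finset V := Finset.univ.filter (fun v => G.degree v ≤ d - 1) with hS
  set B : Finset V := Finset.univ.filter (fun v => d ≤ G.degree v) with hB
  have hSB : S.card + B.card = h := by
    have hBc : B = Sᶜ := by
      ext v
      simp only [hS, hB, Finset.mem_filter, Finset.mem_univ, true_and, Finset.mem_compl]
      omega
    rw [hBc, Finset.card_add_card_compl]
  have hBsum : d * B.card ≤ ∑ v, G.degree v := by
    calc d * B.card = ∑ v ∈ B, d := by rw [Finset.sum_const, smul_eq_mul, mul_comm]
    _ ≤ ∑ v ∈ B, G.degree v := Finset.sum_le_sum (fun v hv => (Finset.mem_filter.1 hv).2)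
    _ ≤ ∑ v, G.degree v := Finset.sum_le_sum_of_subset (Finset.subset_univ B)
  -- real inequality: ε*h ≤ d*S.card
  have key : ε * (h : ℝ) ≤ (d : ℝ) * S.card := by
    rw [htopv, htope] at hmadtop
    have h1 : (d : ℝ) * B.card ≤ 2 * (G.edgeFinset.card : ℝ) := by
      exact_mod_cast (by exact_mod_cast hBsum.trans_eq hsum : d * B.card ≤ 2 * G.edgeFinset.card)
    have h2 : (S.card : ℝ) + B.card = h := by exact_mod_cast hSB
    nlinarith [h1, hmadtop, h2]
  obtain ⟨I, hIS, hind, hcard⟩ := greedy_ind G d hd S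
    (fun v hv => (Finset.mem_filter.1 hv).2)
  refine ⟨I, hind, fun v hv => (Finset.mem_filter.1 (hIS hv)).2, ?_⟩
  have hdR : (0 : ℝ) < d := by exact_mod_cast hd
  have hcR : (S.card : ℝ) ≤ d * I.card := by exact_mod_cast hcard
  rw [div_le_iff₀ (by positivity)]
  nlinarith [key, hcR, hdR]
end

section
/- Let d, k be positive integers with k ≥ d + 1 and ε > 0 with ε ≤ d². There exist constants C and c = c(d, ε) such that for every graph G on n vertices with maximum average degree at most d - ε, the diameter of the reconfiguration graph R_k(G) is at most C·n^c. -/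
/-- A proper `k`-colouring of `G`. -/
abbrev PropColoring {V : Type*} (G : SimpleGraph V) (k : ℕ) :=
  {f : V → Fin k // ∀ u v, G.Adj u v → f u ≠ f v}

/-- The reconfiguration graph `R_k(G)`: vertices are the proper `k`-colourings of `G`,
two colourings adjacent iff they differ on exactly one vertex. -/
def ReconfGraph {V : Type*} (G : SimpleGraph V) (k : ℕ) : SimpleGraph (PropColoring G k) where
  Adj f g := ∃ v, f.1 v ≠ g.1 v ∧ ∀ w, w ≠ v → f.1 w = g.1 w
  symm := by constructor; rintro f g ⟨v, hv, hw⟩; exact ⟨v, hv.symm, fun w h => (hw w h).symm⟩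
  loopless := by constructor; rintro f ⟨v, hv, _⟩; exact hv rfl

/-- The number of steps along a walk in the reconfiguration graph at which the colour of
the vertex `u` changes. -/
def recolorCount {V : Type*} {G : SimpleGraph V} {k : ℕ} (u : V)
    {α β : PropColoring G k} (p : (ReconfGraph G k).Walk α β) : ℕ :=
  ((p.support.zip p.support.tail).filter (fun q => decide (q.1.1 u ≠ q.2.1 u))).length

/-- Restriction of a proper colouring of `G` to an induced subgraph. -/
def PropColoring.restrict {V : Type*} {G : SimpleGraph V} {k : ℕ} (s : Set V)
    (α : PropColoring G k) : PropColoring (G.induce s) k :=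
  ⟨fun v => α.1 v.1, fun u v h => α.2 u.1 v.1 h⟩

namespace BP
open SimpleGraph

variable {V : Type*} {G : SimpleGraph V} {k : ℕ}

@[simp] lemma rc_nil (u : V) (α : PropColoring G k) :
    recolorCount u (Walk.nil : (ReconfGraph G k).Walk α α) = 0 := rfl

lemma rc_cons (u : V) {α β γ : PropColoring G k} (h : (ReconfGraph G k).Adj α β)
    (p : (ReconfGraph G k).Walk β γ) :
    recolorCount u (Walk.cons h p) =
      (if α.1 u = β.1 u then 0 else 1) + recolorCount u p := by
  unfold recolorCount
  rw [Walk.support_cons]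
  conv_lhs => rw [p.support_eq_cons]
  simp only [List.zip_cons_cons, List.tail_cons, List.filter_cons]
  rw [← p.support_eq_cons]
  by_cases hc : α.1 u = β.1 u <;> simp [hc, Nat.add_comm]

lemma rc_append (u : V) {α β γ : PropColoring G k}
    (p : (ReconfGraph G k).Walk α β) (q : (ReconfGraph G k).Walk β γ) :
    recolorCount u (p.append q) = recolorCount u p + recolorCount u q := by
  induction p with
  | nil => simp
  | cons h p ih => rw [Walk.cons_append, rc_cons, rc_cons, ih]; omega

lemma length_eq_sum_rc [Fintype V] {α β : PropColoring G k}
    (p : (ReconfGraph G k).Walk α β) :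
    p.length = ∑ v, recolorCount v p := by
  classical
  induction p with
  | nil => simp
  | @cons a b c h p ih =>
    obtain ⟨v, hv, hw⟩ := id h
    have : ∀ w, (if a.1 w = b.1 w then 0 else 1) = if w = v then 1 else 0 := by
      intro w
      by_cases hwv : w = v
      · subst hwv; simp [hv]
      · simp [hwv, hw w hwv]
    simp only [Walk.length_cons, rc_cons, Finset.sum_add_distrib, ih]
    simp [this]
    omega

lemma exists_free_color {s : Finset (Fin k)} (h : s.card < k) : ∃ c, c ∉ s := by
  by_contra hc
  push_neg at hc
  have hsub : (Finset.univ : Finset (Fin k)) ⊆ s := fun x _ => hc x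
  have := Finset.card_le_card hsub
  simp at this
  omega

open SimpleGraph

variable {V : Type*} {G : SimpleGraph V} {k : ℕ}





lemma update_proper [DecidableEq V] (γ : PropColoring G k) (v : V) (c : Fin k)
    (hvc : ∀ w, G.Adj v w → c ≠ γ.1 w) :
    ∀ x y, G.Adj x y → Function.update γ.1 v c x ≠ Function.update γ.1 v c y := by
  intro x y hadj
  rcases eq_or_ne x v with hx | hx
  · have hy : y ≠ v := fun h => G.ne_of_adj hadj (hx.trans h.symm)
    rw [hx, Function.update_self, Function.update_of_ne hy]
    exact hvc y (hx ▸ hadj)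
  · rw [Function.update_of_ne hx]
    rcases eq_or_ne y v with hy | hy
    · rw [hy, Function.update_self]
      exact fun h => hvc x (hy ▸ hadj.symm) h.symm
    · rw [Function.update_of_ne hy]; exact γ.2 x y hadj

lemma sweep [Fintype V] [DecidableEq V] {S : Finset V}
    (hind : ∀ x ∈ S, ∀ y ∈ S, ¬G.Adj x y)
    (γ β : PropColoring G k) (hdiff : ∀ x, γ.1 x ≠ β.1 x → x ∈ S) :
    ∃ p : (ReconfGraph G k).Walk γ β,
      ∀ x, recolorCount x p ≤ if γ.1 x = β.1 x then 0 else 1 := by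
  classical
  suffices H : ∀ (n : ℕ) (γ : PropColoring G k), (∀ x, γ.1 x ≠ β.1 x → x ∈ S) →
      (Finset.univ.filter (fun x => γ.1 x ≠ β.1 x)).card ≤ n →
      ∃ p : (ReconfGraph G k).Walk γ β,
        ∀ x, recolorCount x p ≤ if γ.1 x = β.1 x then 0 else 1 by
    exact H _ γ hdiff le_rfl
  intro n
  induction n with
  | zero =>
    intro γ hdiff hcard
    have hγ : γ = β := by
      apply Subtype.ext; funext x
      by_contra hx
      have : x ∈ Finset.univ.filter (fun x => γ.1 x ≠ β.1 x) := by
          simp only [Finset.mem_filter, Finset.mem_univ, true_and]; exact hx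
      rw [Finset.card_eq_zero.mp (Nat.le_zero.mp hcard)] at this
      simp at this
    subst hγ
    exact ⟨Walk.nil, by intro x; simp⟩
  | succ n ih =>
    intro γ hdiff hcard
    rcases (Finset.univ.filter (fun x => γ.1 x ≠ β.1 x)).eq_empty_or_nonempty with hT | hne
    · have hγ : γ = β := by
        apply Subtype.ext; funext x
        by_contra hx
        have : x ∈ Finset.univ.filter (fun x => γ.1 x ≠ β.1 x) := by
          simp only [Finset.mem_filter, Finset.mem_univ, true_and]; exact hx
        rw [hT] at this; simp at this
      subst hγ
      exact ⟨Walk.nil, by intro x; simp⟩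
    · obtain ⟨v, hv⟩ := hne
      simp only [Finset.mem_filter, Finset.mem_univ, true_and] at hv
      have hvS : v ∈ S := hdiff v hv
      -- new coloring
      have hproper := update_proper γ v (β.1 v) (by
        intro w hadj
        by_cases hwb : γ.1 w = β.1 w
        · rw [hwb]; exact β.2 v w hadj
        · exact fun hc => hind v hvS w (hdiff w hwb) hadj)
      set γ' : PropColoring G k := ⟨Function.update γ.1 v (β.1 v), hproper⟩ with hγ'
      have hadj : (ReconfGraph G k).Adj γ γ' := by
        refine ⟨v, ?_, fun w hw => ?_⟩
        · simpa [hγ', Function.update_self] using hv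
        · simp [hγ', Function.update_of_ne hw]
      have hdiff' : ∀ x, γ'.1 x ≠ β.1 x → x ∈ S := by
        intro x hx
        rcases eq_or_ne x v with rfl | hxv
        · simp [hγ'] at hx
        · exact hdiff x (by simpa [hγ', Function.update_of_ne hxv] using hx)
      have hsub : Finset.univ.filter (fun x => γ'.1 x ≠ β.1 x) ⊆
          (Finset.univ.filter (fun x => γ.1 x ≠ β.1 x)).erase v := by
        intro x hx
        simp only [Finset.mem_filter, Finset.mem_univ, true_and] at hx
        rcases eq_or_ne x v with rfl | hxv
        · simp [hγ'] at hx
        · simp only [Finset.mem_erase, Finset.mem_filter, Finset.mem_univ, true_and]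
          exact ⟨hxv, by simpa [hγ', Function.update_of_ne hxv] using hx⟩
      have hcard' : (Finset.univ.filter (fun x => γ'.1 x ≠ β.1 x)).card ≤ n := by
        have h1 := Finset.card_le_card hsub
        have h2 : ((Finset.univ.filter (fun x => γ.1 x ≠ β.1 x)).erase v).card
            = (Finset.univ.filter (fun x => γ.1 x ≠ β.1 x)).card - 1 :=
          Finset.card_erase_of_mem (by simp [hv])
        omega
      obtain ⟨p', hp'⟩ := ih γ' hdiff' hcard'
      refine ⟨Walk.cons hadj p', fun x => ?_⟩
      rw [rc_cons]
      rcases eq_or_ne x v with rfl | hxv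
      · have h1 : γ.1 x ≠ γ'.1 x := by simpa [hγ', Function.update_self] using hv
        have h2 : γ'.1 x = β.1 x := by simp [hγ']
        have := hp' x
        rw [h2, if_pos rfl] at this
        rw [if_neg h1, if_neg hv]
        omega
      · have h1 : γ.1 x = γ'.1 x := by simp [hγ', Function.update_of_ne hxv]
        have := hp' x
        rw [← h1] at this
        simpa [h1] using this

lemma clear [Fintype V] [DecidableEq V] [DecidableRel G.Adj] {S : Finset V}
    (hdeg : ∀ v ∈ S, (G.neighborFinset v).card + 1 < k)
    (γ : PropColoring G k) (u₀ : V) (b : Fin k) :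
    ∃ (γ' : PropColoring G k) (p : (ReconfGraph G k).Walk γ γ'),
      (∀ x, ¬(x ∈ S ∧ G.Adj u₀ x) → γ'.1 x = γ.1 x) ∧
      (∀ v ∈ S, G.Adj u₀ v → γ'.1 v ≠ b) ∧
      (∀ x, recolorCount x p ≤ if x ∈ S ∧ G.Adj u₀ x ∧ γ.1 x = b then 1 else 0) := by
  classical
  suffices H : ∀ (n : ℕ) (γ : PropColoring G k),
      (S.filter (fun v => G.Adj u₀ v ∧ γ.1 v = b)).card ≤ n →
      ∃ (γ' : PropColoring G k) (p : (ReconfGraph G k).Walk γ γ'),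
        (∀ x, ¬(x ∈ S ∧ G.Adj u₀ x) → γ'.1 x = γ.1 x) ∧
        (∀ v ∈ S, G.Adj u₀ v → γ'.1 v ≠ b) ∧
        (∀ x, recolorCount x p ≤ if x ∈ S ∧ G.Adj u₀ x ∧ γ.1 x = b then 1 else 0) by
    exact H _ γ le_rfl
  intro n
  induction n with
  | zero =>
    intro γ hcard
    refine ⟨γ, Walk.nil, fun x _ => rfl, fun v hvS hadj hvb => ?_, fun x => by simp⟩
    have : v ∈ S.filter (fun v => G.Adj u₀ v ∧ γ.1 v = b) := by simp [hvS, hadj, hvb]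
    rw [Finset.card_eq_zero.mp (Nat.le_zero.mp hcard)] at this
    simp at this
  | succ n ih =>
    intro γ hcard
    rcases (S.filter (fun v => G.Adj u₀ v ∧ γ.1 v = b)).eq_empty_or_nonempty with hT | hne
    · refine ⟨γ, Walk.nil, fun x _ => rfl, fun v hvS hadj hvb => ?_, fun x => by simp⟩
      have : v ∈ S.filter (fun v => G.Adj u₀ v ∧ γ.1 v = b) := by simp [hvS, hadj, hvb]
      rw [hT] at this; simp at this
    · obtain ⟨v, hv⟩ := hne
      simp only [Finset.mem_filter] at hv
      obtain ⟨hvS, hvadj, hvb⟩ := hv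
      -- find a free color for v
      have hforb : (insert b ((G.neighborFinset v).image γ.1)).card < k := by
        calc (insert b ((G.neighborFinset v).image γ.1)).card
            ≤ ((G.neighborFinset v).image γ.1).card + 1 := Finset.card_insert_le _ _
          _ ≤ (G.neighborFinset v).card + 1 := by
              have := Finset.card_image_le (s := G.neighborFinset v) (f := γ.1); omega
          _ < k := hdeg v hvS
      obtain ⟨c, hc⟩ := exists_free_color hforb
      have hcb : c ≠ b := by intro h; exact hc (by simp [h])
      have hcn : ∀ w, G.Adj v w → c ≠ γ.1 w := by
        intro w hw hcw
        exact hc (Finset.mem_insert_of_mem (Finset.mem_image.mpr ⟨w, by simp [hw], hcw.symm⟩))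
      have hproper := update_proper γ v c hcn
      set γ₁ : PropColoring G k := ⟨Function.update γ.1 v c, hproper⟩ with hγ₁
      have hadj1 : (ReconfGraph G k).Adj γ γ₁ := by
        refine ⟨v, ?_, fun w hw => ?_⟩
        · simp only [hγ₁, Function.update_self]
          rw [hvb]; exact fun h => hcb h.symm
        · simp [hγ₁, Function.update_of_ne hw]
      have hsub : S.filter (fun w => G.Adj u₀ w ∧ γ₁.1 w = b) ⊆
          (S.filter (fun w => G.Adj u₀ w ∧ γ.1 w = b)).erase v := by
        intro x hx
        simp only [Finset.mem_filter] at hx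
        rcases eq_or_ne x v with rfl | hxv
        · exfalso; have := hx.2.2; simp [hγ₁] at this; exact hcb this
        · simp only [Finset.mem_erase, Finset.mem_filter]
          refine ⟨hxv, hx.1, hx.2.1, ?_⟩
          have := hx.2.2
          exact (Function.update_of_ne hxv _ _).symm.trans this
      have hcard' : (S.filter (fun w => G.Adj u₀ w ∧ γ₁.1 w = b)).card ≤ n := by
        have h1 := Finset.card_le_card hsub
        have h2 := Finset.card_erase_of_mem
          (show v ∈ S.filter (fun w => G.Adj u₀ w ∧ γ.1 w = b) by
            simp only [Finset.mem_filter]; exact ⟨hvS, hvadj, hvb⟩)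
        omega
      obtain ⟨γ', p', hout, hclear, hrc⟩ := ih γ₁ hcard'
      refine ⟨γ', Walk.cons hadj1 p', ?_, hclear, ?_⟩
      · intro x hx
        rw [hout x hx]
        have hxv : x ≠ v := by rintro rfl; exact hx ⟨hvS, hvadj⟩
        exact Function.update_of_ne hxv _ _
      · intro x
        rw [rc_cons]
        rcases eq_or_ne x v with hxeq | hxv
        · rw [hxeq]
          have h1 : γ.1 v ≠ γ₁.1 v := by
            show γ.1 v ≠ Function.update γ.1 v c v
            rw [Function.update_self, hvb]
            exact fun h => hcb h.symm
          have h2 : ¬ (v ∈ S ∧ G.Adj u₀ v ∧ γ₁.1 v = b) := by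
            rintro ⟨-, -, h⟩
            rw [show γ₁.1 v = c from Function.update_self _ _ _] at h
            exact hcb h
          have h3 := hrc v
          rw [if_neg h2] at h3
          rw [if_neg h1, if_pos ⟨hvS, hvadj, hvb⟩]
          omega
        · have h1 : γ.1 x = γ₁.1 x := (Function.update_of_ne hxv _ _).symm
          have hcond : (x ∈ S ∧ G.Adj u₀ x ∧ γ₁.1 x = b) ↔ (x ∈ S ∧ G.Adj u₀ x ∧ γ.1 x = b) := by
            rw [← h1]
          have h3 := hrc x
          rw [if_congr hcond rfl rfl] at h3
          rw [if_pos h1]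
          simpa using h3
  

lemma lift [Fintype V] [DecidableEq V] [DecidableRel G.Adj] {S : Finset V}
    (hind : ∀ x ∈ S, ∀ y ∈ S, ¬G.Adj x y)
    (hdeg : ∀ v ∈ S, (G.neighborFinset v).card + 1 < k)
    {A B : PropColoring (G.induce ((↑S : Set V)ᶜ)) k}
    (q : (ReconfGraph (G.induce ((↑S : Set V)ᶜ)) k).Walk A B) :
    ∀ (γ : PropColoring G k), PropColoring.restrict ((↑S : Set V)ᶜ) γ = A →
    ∃ (τ : PropColoring G k) (p : (ReconfGraph G k).Walk γ τ),
      PropColoring.restrict ((↑S : Set V)ᶜ) τ = B ∧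
      (∀ (x : ((↑S : Set V)ᶜ : Set V)), recolorCount x.1 p ≤ recolorCount x q) ∧
      (∀ v ∈ S, recolorCount v p ≤ ∑ u ∈ G.neighborFinset v,
        (if h : u ∈ ((↑S : Set V)ᶜ) then recolorCount (⟨u, h⟩ : ((↑S : Set V)ᶜ : Set V)) q else 0)) := by
  induction q with
  | nil => intro γ hγ; exact ⟨γ, Walk.nil, hγ, by simp, by intro v _; simp⟩
  | @cons A A₁ B h q' ih =>
    intro γ hγA
    obtain ⟨u₀, hne, hoff⟩ := id h
    set b := A₁.1 u₀ with hb
    have hu₀S : u₀.1 ∉ S := fun hc => u₀.2 (Finset.mem_coe.mpr hc)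
    have hA : ∀ (x : ((↑S : Set V)ᶜ : Set V)), A.1 x = γ.1 x.1 := by
      intro x; rw [← hγA]; rfl
    obtain ⟨γ', p₁, hout, hclear, hrc₁⟩ := clear hdeg γ u₀.1 b
    have hγ's : ∀ x, x ∉ S → γ'.1 x = γ.1 x := fun x hx => hout x (fun hc => hx hc.1)
    have hγ'A : ∀ (x : ((↑S : Set V)ᶜ : Set V)), γ'.1 x.1 = A.1 x := by
      intro x
      rw [hγ's x.1 (fun hc => x.2 (Finset.mem_coe.mpr hc)), hA x]
    -- the new colouring γ₁ : recolor u₀ to b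
    have hproper1 := update_proper γ' u₀.1 b (by
      intro w hadj
      by_cases hwS : w ∈ S
      · exact fun hcb => hclear w hwS hadj hcb.symm
      · have hws : w ∈ ((↑S : Set V)ᶜ) := fun hc => hwS (Finset.mem_coe.mp hc)
        have hwu : (⟨w, hws⟩ : ((↑S : Set V)ᶜ : Set V)) ≠ u₀ :=
          fun hc => G.ne_of_adj hadj (congrArg Subtype.val hc).symm
        rw [hγ'A ⟨w, hws⟩, hoff ⟨w, hws⟩ hwu]
        exact A₁.2 u₀ ⟨w, hws⟩ hadj)
    set γ₁ : PropColoring G k := ⟨Function.update γ'.1 u₀.1 b, hproper1⟩ with hγ₁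
    have hupd0 : γ₁.1 u₀.1 = b := Function.update_self _ _ _
    have hupd : ∀ y, y ≠ u₀.1 → γ₁.1 y = γ'.1 y := fun y hy => Function.update_of_ne hy _ _
    have hne' : γ'.1 u₀.1 ≠ b := by
      rw [hγ's u₀.1 hu₀S, ← hA u₀]
      exact hne
    have hadj1 : (ReconfGraph G k).Adj γ' γ₁ :=
      ⟨u₀.1, by rw [hupd0]; exact hne', fun w hw => (hupd w hw).symm⟩
    have hγ₁A : PropColoring.restrict ((↑S : Set V)ᶜ) γ₁ = A₁ := by
      apply Subtype.ext; funext x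
      show γ₁.1 x.1 = A₁.1 x
      rcases eq_or_ne x u₀ with hx | hx
      · rw [hx, hupd0, hb]
      · have hx' : x.1 ≠ u₀.1 := fun hc => hx (Subtype.ext hc)
        rw [hupd x.1 hx', hγ'A x, hoff x hx]
    obtain ⟨τ, p₂, hτB, hbs, hbS⟩ := ih γ₁ hγ₁A
    refine ⟨τ, p₁.append (Walk.cons hadj1 p₂), hτB, ?_, ?_⟩
    · intro x
      rw [rc_append, rc_cons, rc_cons]
      have hxS : x.1 ∉ S := fun hc => x.2 (Finset.mem_coe.mpr hc)
      have h1 : recolorCount x.1 p₁ = 0 := by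
        have := hrc₁ x.1
        rw [if_neg (fun hc => hxS hc.1)] at this; omega
      have h3 := hbs x
      rcases eq_or_ne x u₀ with hx | hx
      · have hx' : x.1 = u₀.1 := congrArg Subtype.val hx
        have hg : γ'.1 x.1 ≠ γ₁.1 x.1 := by rw [hx', hupd0]; exact hne'
        have hAA : ¬ (A.1 x = A₁.1 x) := by rw [hx]; exact hne
        rw [if_neg hg, if_neg hAA, h1]
        omega
      · have hx' : x.1 ≠ u₀.1 := fun hc => hx (Subtype.ext hc)
        have hg : γ'.1 x.1 = γ₁.1 x.1 := (hupd x.1 hx').symm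
        have hAA : A.1 x = A₁.1 x := hoff x hx
        rw [if_pos hg, if_pos hAA, h1]
        omega
    · intro v hvS
      rw [rc_append, rc_cons]
      have hvu : v ≠ u₀.1 := fun hc => hu₀S (hc ▸ hvS)
      have h2 : γ'.1 v = γ₁.1 v := (hupd v hvu).symm
      rw [if_pos h2]
      have h1 : recolorCount v p₁ ≤ if G.Adj u₀.1 v then 1 else 0 := by
        have h := hrc₁ v
        by_cases hadj : G.Adj u₀.1 v
        · rw [if_pos hadj]
          by_cases hvb : γ.1 v = b
          · rwa [if_pos ⟨hvS, hadj, hvb⟩] at h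
          · rw [if_neg (fun hc => hvb hc.2.2)] at h; omega
        · rw [if_neg hadj]
          rwa [if_neg (fun hc => hadj hc.2.1)] at h
      have h3 := hbS v hvS
      have hsum : ∀ u ∈ G.neighborFinset v,
          (if h : u ∈ ((↑S : Set V)ᶜ) then
            recolorCount (⟨u, h⟩ : ((↑S : Set V)ᶜ : Set V)) (Walk.cons (show (ReconfGraph _ k).Adj A A₁ from ⟨u₀, hne, hoff⟩) q') else 0)
          = (if h : u ∈ ((↑S : Set V)ᶜ) then
            recolorCount (⟨u, h⟩ : ((↑S : Set V)ᶜ : Set V)) q' else 0)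
            + (if u = u₀.1 then 1 else 0) := by
        intro u _
        by_cases hus : u ∈ ((↑S : Set V)ᶜ)
        · rw [dif_pos hus, dif_pos hus, rc_cons]
          rcases eq_or_ne u u₀.1 with hueq | hune
          · have heq : (⟨u, hus⟩ : ((↑S : Set V)ᶜ : Set V)) = u₀ := Subtype.ext hueq
            rw [heq, if_pos hueq, if_neg hne]
            omega
          · have heq : (⟨u, hus⟩ : ((↑S : Set V)ᶜ : Set V)) ≠ u₀ := fun hc => hune (congrArg Subtype.val hc)
            rw [if_neg hune, if_pos (hoff _ heq)]
            omega
        · rw [dif_neg hus, dif_neg hus]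
          have : u ≠ u₀.1 := by rintro rfl; exact hus u₀.2
          rw [if_neg this]
      rw [Finset.sum_congr rfl hsum, Finset.sum_add_distrib]
      have h4 : (∑ u ∈ G.neighborFinset v, if u = u₀.1 then 1 else 0)
          = if G.Adj u₀.1 v then 1 else 0 := by
        rw [Finset.sum_ite_eq' (G.neighborFinset v) u₀.1 (fun _ => 1)]
        have : u₀.1 ∈ G.neighborFinset v ↔ G.Adj u₀.1 v := by
          rw [SimpleGraph.mem_neighborFinset, SimpleGraph.adj_comm]
        by_cases hadj : G.Adj u₀.1 v
        · rw [if_pos (this.mpr hadj), if_pos hadj]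
        · rw [if_neg (fun hc => hadj (this.mp hc)), if_neg hadj]
      rw [h4]
      omega

lemma greedy [Fintype V] [DecidableEq V] [DecidableRel G.Adj] {d : ℕ}
    (L : Finset V) (hdegL : ∀ v ∈ L, G.degree v + 1 ≤ d) :
    ∃ S : Finset V, S ⊆ L ∧ (∀ x ∈ S, ∀ y ∈ S, ¬G.Adj x y) ∧ L.card ≤ d * S.card := by
  suffices H : ∀ (n : ℕ) (L : Finset V), (∀ v ∈ L, G.degree v + 1 ≤ d) → L.card ≤ n →
      ∃ S : Finset V, S ⊆ L ∧ (∀ x ∈ S, ∀ y ∈ S, ¬G.Adj x y) ∧ L.card ≤ d * S.card by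
    exact H _ L hdegL le_rfl
  intro n
  induction n with
  | zero =>
    intro L _ hcard
    exact ⟨∅, Finset.empty_subset _, by simp, by omega⟩
  | succ n ih =>
    intro L hdegL hcard
    rcases L.eq_empty_or_nonempty with hL | hne
    · exact ⟨∅, Finset.empty_subset _, by simp, by simp [hL]⟩
    · obtain ⟨v, hvL⟩ := hne
      set t : Finset V := insert v (G.neighborFinset v) with ht
      have htcard : t.card ≤ d := by
        calc t.card ≤ (G.neighborFinset v).card + 1 := Finset.card_insert_le _ _
          _ ≤ d := hdegL v hvL
      set L' : Finset V := L \ t with hL'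
      have hL'sub : L' ⊆ L.erase v := by
        intro x hx
        rw [hL', Finset.mem_sdiff] at hx
        exact Finset.mem_erase.mpr ⟨fun hc => hx.2 (hc ▸ Finset.mem_insert_self v _), hx.1⟩
      have hL'card : L'.card ≤ n := by
        have h1 := Finset.card_le_card hL'sub
        have h2 := Finset.card_erase_of_mem hvL
        omega
      obtain ⟨S', hS'sub, hS'ind, hS'card⟩ := ih L' (fun x hx => hdegL x ((Finset.sdiff_subset) hx)) hL'card
      have hvS' : v ∉ S' := fun hc => (Finset.mem_sdiff.mp (hS'sub hc)).2 (Finset.mem_insert_self v _)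
      refine ⟨insert v S', ?_, ?_, ?_⟩
      · intro x hx
        rcases Finset.mem_insert.mp hx with rfl | hx
        · exact hvL
        · exact Finset.sdiff_subset (hS'sub hx)
      · intro x hx y hy
        rcases Finset.mem_insert.mp hx with hxv | hx
        · rcases Finset.mem_insert.mp hy with hyv | hy
          · rw [hxv, hyv]; exact G.loopless.irrefl v
          · rw [hxv]
            intro hadj
            exact (Finset.mem_sdiff.mp (hS'sub hy)).2
              (Finset.mem_insert_of_mem ((SimpleGraph.mem_neighborFinset _ _ _).mpr hadj))
        · rcases Finset.mem_insert.mp hy with hyv | hy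
          · rw [hyv]
            intro hadj
            exact (Finset.mem_sdiff.mp (hS'sub hx)).2
              (Finset.mem_insert_of_mem ((SimpleGraph.mem_neighborFinset _ _ _).mpr hadj.symm))
          · exact hS'ind x hx y hy
      · have h3 : L.card ≤ L'.card + t.card := Finset.card_le_card_sdiff_add_card
        have h4 : (insert v S').card = S'.card + 1 := Finset.card_insert_of_notMem hvS'
        calc L.card ≤ L'.card + t.card := h3
          _ ≤ d * S'.card + d := by omega
          _ = d * (S'.card + 1) := by ring
          _ = d * (insert v S').card := by rw [h4]

lemma mad_descend [Fintype V] {d : ℕ} {ε : ℝ}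
    (hyp : ∀ H : G.Subgraph, H.verts.Nonempty →
      2 * (H.edgeSet.ncard : ℝ) ≤ ((d : ℝ) - ε) * H.verts.ncard)
    (s : Set V) :
    ∀ H : (G.induce s).Subgraph, H.verts.Nonempty →
      2 * (H.edgeSet.ncard : ℝ) ≤ ((d : ℝ) - ε) * H.verts.ncard := by
  intro H hHne
  set H' : G.Subgraph :=
    { verts := Subtype.val '' H.verts
      Adj := fun x y => ∃ (hx : x ∈ s) (hy : y ∈ s), H.Adj ⟨x, hx⟩ ⟨y, hy⟩
      adj_sub := by rintro x y ⟨hx, hy, hadj⟩; exact H.adj_sub hadj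
      edge_vert := by rintro x y ⟨hx, hy, hadj⟩; exact ⟨⟨x, hx⟩, H.edge_vert hadj, rfl⟩
      symm := by constructor; rintro x y ⟨hx, hy, hadj⟩; exact ⟨hy, hx, H.adj_symm hadj⟩ } with hH'
  have hverts : H'.verts.ncard = H.verts.ncard :=
    Set.ncard_image_of_injective _ Subtype.val_injective
  have hedges : H.edgeSet.ncard ≤ H'.edgeSet.ncard := by
    have hsub : (Sym2.map Subtype.val) '' H.edgeSet ⊆ H'.edgeSet := by
      rintro e ⟨e', he', rfl⟩
      induction e' with
      | _ a bb =>
        rw [SimpleGraph.Subgraph.mem_edgeSet] at he'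
        exact SimpleGraph.Subgraph.mem_edgeSet.mpr ⟨a.2, bb.2, by
          convert he' <;> simp⟩
    calc H.edgeSet.ncard = ((Sym2.map Subtype.val) '' H.edgeSet).ncard :=
          (Set.ncard_image_of_injective _ (Sym2.map.injective Subtype.val_injective)).symm
      _ ≤ H'.edgeSet.ncard := Set.ncard_le_ncard hsub (Set.toFinite _)
  have h1 := hyp H' (hHne.image _)
  rw [hverts] at h1
  have : (H.edgeSet.ncard : ℝ) ≤ (H'.edgeSet.ncard : ℝ) := Nat.cast_le.mpr hedges
  linarith

lemma main (d k : ℕ) (hd : 0 < d) (hk : d + 1 ≤ k) (ε : ℝ) (hε : 0 < ε)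
    (F : ℕ → ℝ) (hF0 : ∀ m, 0 ≤ F m)
    (hFmono : ∀ m n : ℕ, m ≤ n → F m ≤ F n)
    (hFkey : ∀ m n : ℕ, (m : ℝ) ≤ (1 - ε / (2 * (d : ℝ) ^ 2)) * n → 1 ≤ n →
      ((d : ℝ) - 1) * F m + 1 ≤ F n) :
    ∀ (n : ℕ) (V : Type) (iV : Fintype V) (G : SimpleGraph V),
      Fintype.card V ≤ n →
      (∀ H : G.Subgraph, H.verts.Nonempty →
        2 * (H.edgeSet.ncard : ℝ) ≤ ((d : ℝ) - ε) * H.verts.ncard) →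
      ∀ α β : PropColoring G k, ∃ p : (ReconfGraph G k).Walk α β,
        ∀ v, (recolorCount v p : ℝ) ≤ F (Fintype.card V) := by
  intro n
  induction n with
  | zero =>
    intro V iV G hcard hyp α β
    haveI : IsEmpty V := Fintype.card_eq_zero_iff.mp (Nat.le_zero.mp hcard)
    have hαβ : α = β := Subtype.ext (funext fun x => isEmptyElim x)
    subst hαβ
    exact ⟨Walk.nil, fun v => isEmptyElim v⟩
  | succ n ih =>
    intro V iV G hcard hyp α β
    classical
    rcases Nat.eq_zero_or_pos (Fintype.card V) with hm0 | hmpos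
    · haveI : IsEmpty V := Fintype.card_eq_zero_iff.mp hm0
      have hαβ : α = β := Subtype.ext (funext fun x => isEmptyElim x)
      subst hαβ
      exact ⟨Walk.nil, fun v => isEmptyElim v⟩
    haveI : Nonempty V := Fintype.card_pos_iff.mp hmpos
    set m := Fintype.card V with hm
    -- edge count bound
    have hE : (2 : ℝ) * G.edgeFinset.card ≤ ((d : ℝ) - ε) * m := by
      have htop := hyp ⊤ (by rw [SimpleGraph.Subgraph.verts_top]; exact Set.univ_nonempty)
      have h1 : (⊤ : G.Subgraph).edgeSet.ncard = G.edgeFinset.card := by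
        rw [SimpleGraph.Subgraph.edgeSet_top]
        exact Set.ncard_eq_toFinset_card' _
      have h2 : (⊤ : G.Subgraph).verts.ncard = m := by
        rw [SimpleGraph.Subgraph.verts_top, Set.ncard_univ, Nat.card_eq_fintype_card]
      rw [h1, h2] at htop
      exact htop
    have hdegsum : ∑ v, G.degree v = 2 * G.edgeFinset.card :=
      SimpleGraph.sum_degrees_eq_twice_card_edges G
    set L : Finset V := Finset.univ.filter (fun v => G.degree v + 1 ≤ d) with hL
    have hLm : L.card ≤ m := by
      rw [hm, ← Finset.card_univ]; exact Finset.card_le_card (Finset.subset_univ _)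
    have hLbig : ε * m ≤ (d : ℝ) * L.card := by
      have h3 : (Finset.univ \ L).card • d ≤ ∑ v ∈ Finset.univ \ L, G.degree v := by
        apply Finset.card_nsmul_le_sum
        intro v hv
        simp only [hL, Finset.mem_sdiff, Finset.mem_univ, true_and, Finset.mem_filter,
          not_and, not_le] at hv
        omega
      have h4 : ∑ v ∈ Finset.univ \ L, G.degree v ≤ ∑ v, G.degree v :=
        Finset.sum_le_sum_of_subset (Finset.subset_univ _)
      have h5 : (Finset.univ \ L).card = m - L.card := by
        rw [Finset.card_sdiff_of_subset (Finset.subset_univ _), Finset.card_univ]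
      have h7 : (m - L.card) * d ≤ 2 * G.edgeFinset.card := by
        rw [← hdegsum]
        calc (m - L.card) * d = (Finset.univ \ L).card • d := by rw [h5, smul_eq_mul]
          _ ≤ ∑ v ∈ Finset.univ \ L, G.degree v := h3
          _ ≤ ∑ v, G.degree v := h4
      have h8 : (((m - L.card) * d : ℕ) : ℝ) ≤ ((d : ℝ) - ε) * m := by
        refine le_trans ?_ hE
        push_cast
        exact_mod_cast Nat.cast_le.mpr h7
      rw [Nat.cast_mul, Nat.cast_sub hLm] at h8
      push_cast at h8
      nlinarith [h8]
    have hdegL : ∀ v ∈ L, G.degree v + 1 ≤ d := fun v hv => (Finset.mem_filter.mp hv).2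
    obtain ⟨S, hSL, hSind, hScard⟩ := greedy L hdegL
    have hSbig : ε * m ≤ ((d : ℝ)) ^ 2 * S.card := by
      have hds : (L.card : ℝ) ≤ (d : ℝ) * S.card := by exact_mod_cast hScard
      have hd0 : (0 : ℝ) ≤ (d : ℝ) := Nat.cast_nonneg d
      nlinarith [hLbig]
    have hSpos : 0 < S.card := by
      by_contra h
      push_neg at h
      have h0 : S.card = 0 := by omega
      rw [h0] at hSbig
      have hm1 : (1 : ℝ) ≤ (m : ℝ) := by exact_mod_cast hmpos
      simp at hSbig
      nlinarith
    have hSm : S.card ≤ m := by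
      rw [hm, ← Finset.card_univ]; exact Finset.card_le_card (Finset.subset_univ _)
    set s : Set V := (↑S : Set V)ᶜ with hs
    haveI iS : Fintype ↥s := (Set.toFinite s).fintype
    have hcards : Fintype.card ↥s = m - S.card := by
      have h1 : Fintype.card ↥s = s.toFinset.card := (Set.toFinset_card _).symm
      have h2 : s.toFinset = Sᶜ := by
        ext x
        simp [hs]
      rw [h1, h2, Finset.card_compl]
    have hsle : Fintype.card ↥s ≤ n := by omega
    have hrs : ((Fintype.card ↥s : ℕ) : ℝ) ≤ (1 - ε / (2 * (d : ℝ) ^ 2)) * m := by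
      rw [hcards, Nat.cast_sub hSm]
      have hd0 : (0 : ℝ) < (d : ℝ) ^ 2 := by
        have : (0 : ℝ) < (d : ℝ) := by exact_mod_cast hd
        positivity
      rw [sub_mul, one_mul]
      have hfrac : ε / (2 * (d : ℝ) ^ 2) * m ≤ S.card := by
        rw [div_mul_eq_mul_div, div_le_iff₀ (by positivity)]
        nlinarith [hSbig]
      linarith
    obtain ⟨q, hq⟩ := ih ↥s iS (G.induce s) hsle (mad_descend hyp s)
      (PropColoring.restrict s α) (PropColoring.restrict s β)
    have hdeg' : ∀ v ∈ S, (G.neighborFinset v).card + 1 < k := by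
      intro v hv
      have h1 := hdegL v (hSL hv)
      have h2 : G.degree v = (G.neighborFinset v).card := rfl
      omega
    obtain ⟨τ, p₁, hτ, hbs, hbS⟩ := lift hSind hdeg' q α rfl
    have hτβ : ∀ x (hx : x ∈ s), τ.1 x = β.1 x := by
      intro x hx
      exact congrFun (congrArg Subtype.val hτ) ⟨x, hx⟩
    have hdiffτ : ∀ x, τ.1 x ≠ β.1 x → x ∈ S := by
      intro x hx
      by_contra hxS
      exact hx (hτβ x (fun hc => hxS (Finset.mem_coe.mp hc)))
    obtain ⟨p₂, hp₂⟩ := sweep hSind τ β hdiffτ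
    refine ⟨p₁.append p₂, ?_⟩
    intro v
    rw [rc_append]
    by_cases hvS : v ∈ S
    · have h1 := hbS v hvS
      have hsumR : ((∑ u ∈ G.neighborFinset v,
            if h : u ∈ s then recolorCount (⟨u, h⟩ : ↥s) q else 0 : ℕ) : ℝ)
          ≤ ((d : ℝ) - 1) * F (Fintype.card ↥s) := by
        have hterm : ∀ u ∈ G.neighborFinset v,
            (((if h : u ∈ s then recolorCount (⟨u, h⟩ : ↥s) q else 0 : ℕ)) : ℝ)
              ≤ F (Fintype.card ↥s) := by
          intro u _
          by_cases h : u ∈ s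
          · rw [dif_pos h]; exact hq _
          · rw [dif_neg h]; simpa using hF0 _
        have hdv : ((G.neighborFinset v).card : ℝ) ≤ (d : ℝ) - 1 := by
          have := hdeg' v hvS
          have h1' := hdegL v (hSL hvS)
          have h2 : G.degree v = (G.neighborFinset v).card := rfl
          rw [h2] at h1'
          have : ((G.neighborFinset v).card : ℝ) + 1 ≤ (d : ℝ) := by exact_mod_cast h1'
          linarith
        calc ((∑ u ∈ G.neighborFinset v,
              if h : u ∈ s then recolorCount (⟨u, h⟩ : ↥s) q else 0 : ℕ) : ℝ)
            = ∑ u ∈ G.neighborFinset v,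
              (((if h : u ∈ s then recolorCount (⟨u, h⟩ : ↥s) q else 0 : ℕ)) : ℝ) :=
              Nat.cast_sum _ _
          _ ≤ (G.neighborFinset v).card • F (Fintype.card ↥s) :=
              Finset.sum_le_card_nsmul _ _ _ hterm
          _ = ((G.neighborFinset v).card : ℝ) * F (Fintype.card ↥s) := nsmul_eq_mul _ _
          _ ≤ ((d : ℝ) - 1) * F (Fintype.card ↥s) :=
              mul_le_mul_of_nonneg_right hdv (hF0 _)
      have hkey := hFkey (Fintype.card ↥s) m hrs (by exact_mod_cast hmpos)
      have hc1 : (recolorCount v p₁ : ℝ) ≤ ((d : ℝ) - 1) * F (Fintype.card ↥s) :=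
        le_trans (Nat.cast_le.mpr h1) hsumR
      have hc2 : (recolorCount v p₂ : ℝ) ≤ 1 := by
        have h2 : recolorCount v p₂ ≤ 1 := le_trans (hp₂ v) (by split <;> omega)
        exact_mod_cast h2
      push_cast
      linarith
    · have hvs : v ∈ s := fun hc => hvS (Finset.mem_coe.mp hc)
      have h1 := hbs ⟨v, hvs⟩
      have h2 : recolorCount v p₂ = 0 := by
        have := hp₂ v
        rw [if_pos (hτβ v hvs)] at this
        omega
      have h3 := hq ⟨v, hvs⟩
      have hFm : F (Fintype.card ↥s) ≤ F m := hFmono _ _ (by omega)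
      push_cast [h2]
      have : (recolorCount v p₁ : ℝ) ≤ (recolorCount (⟨v, hvs⟩ : ↥s) q : ℝ) := by
        exact_mod_cast h1
      linarith

end BP


/-- **Theorem of Bousquet–Perarnau.** Let `d, k` be positive integers with
`k ≥ d + 1` and `0 < ε ≤ d²`. There exist constants `C` and `c = c(d, ε)` such that for
every graph `G` on `n` vertices with maximum average degree at most `d - ε`, the diameter
of `R_k(G)` is at most `C·n^c`: any two `k`-colourings are joined by a walk of length at
most `C·n^c`. -/
theorem stmt7 (d k : ℕ) (hd : 0 < d) (hk : d + 1 ≤ k) (ε : ℝ) (hε : 0 < ε)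
    (hεd : ε ≤ (d : ℝ) ^ 2) :
    ∃ C c : ℝ, 0 < C ∧ 0 < c ∧
      ∀ (V : Type) (_ : Fintype V) (G : SimpleGraph V),
        (∀ H : G.Subgraph, H.verts.Nonempty →
          2 * (H.edgeSet.ncard : ℝ) ≤ ((d : ℝ) - ε) * H.verts.ncard) →
        ∀ α β : PropColoring G k,
          ∃ p : (ReconfGraph G k).Walk α β,
            (p.length : ℝ) ≤ C * (Fintype.card V : ℝ) ^ c := by
  classical
  have hd1 : (1 : ℝ) ≤ (d : ℝ) := by exact_mod_cast hd
  have hd2 : (0 : ℝ) < (d : ℝ) ^ 2 := by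
    have : (0 : ℝ) < (d : ℝ) := by exact_mod_cast hd
    positivity
  have hδ'pos : 0 < ε / (2 * (d : ℝ) ^ 2) := by positivity
  have hδ'lt : ε / (2 * (d : ℝ) ^ 2) ≤ 1 / 2 := by
    rw [div_le_div_iff₀ (by positivity) (by norm_num)]
    nlinarith [hεd]
  set r : ℝ := 1 - ε / (2 * (d : ℝ) ^ 2) with hr
  have hr0 : 0 < r := by rw [hr]; linarith
  have hr1 : r < 1 := by rw [hr]; linarith
  set c0 : ℝ := Real.log d / (-Real.log r) with hc0
  have hlogr : Real.log r < 0 := Real.log_neg hr0 hr1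
  have hc0nn : 0 ≤ c0 := div_nonneg (Real.log_nonneg hd1) (by linarith)
  have hdpos : (0 : ℝ) < (d : ℝ) := by exact_mod_cast hd
  have hrc0 : r ^ c0 = (d : ℝ)⁻¹ := by
    rw [Real.rpow_def_of_pos hr0, hc0]
    have h1 : Real.log r * (Real.log d / (-Real.log r)) = -Real.log d := by
      rw [div_neg, mul_neg, mul_div_assoc', mul_comm, mul_div_assoc,
        div_self (ne_of_lt hlogr), mul_one]
    rw [h1, Real.exp_neg, Real.exp_log hdpos]
  set F : ℕ → ℝ := fun mm => (d : ℝ) * (mm : ℝ) ^ c0 with hF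
  have hF0 : ∀ mm, 0 ≤ F mm := fun mm =>
    mul_nonneg (le_of_lt hdpos) (Real.rpow_nonneg (Nat.cast_nonneg _) _)
  have hFmono : ∀ a b : ℕ, a ≤ b → F a ≤ F b := by
    intro a b hab
    refine mul_le_mul_of_nonneg_left ?_ (le_of_lt hdpos)
    exact Real.rpow_le_rpow (Nat.cast_nonneg _) (by exact_mod_cast hab) hc0nn
  have hFkey : ∀ a b : ℕ, (a : ℝ) ≤ r * b → 1 ≤ b → ((d : ℝ) - 1) * F a + 1 ≤ F b := by
    intro a b hab hb
    have hb1 : (1 : ℝ) ≤ (b : ℝ) := by exact_mod_cast hb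
    have h1 : F a ≤ (b : ℝ) ^ c0 := by
      have h2 : ((a : ℝ)) ^ c0 ≤ (r * b) ^ c0 :=
        Real.rpow_le_rpow (Nat.cast_nonneg _) hab hc0nn
      have h3 : (r * (b : ℝ)) ^ c0 = r ^ c0 * (b : ℝ) ^ c0 :=
        Real.mul_rpow (le_of_lt hr0) (Nat.cast_nonneg _)
      have h4 : (d : ℝ) * ((a : ℝ)) ^ c0 ≤ (d : ℝ) * ((r * b) ^ c0) :=
        mul_le_mul_of_nonneg_left h2 (le_of_lt hdpos)
      calc F a = (d : ℝ) * ((a : ℝ)) ^ c0 := rfl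
        _ ≤ (d : ℝ) * ((r * b) ^ c0) := h4
        _ = (d : ℝ) * ((d : ℝ)⁻¹ * (b : ℝ) ^ c0) := by rw [h3, hrc0]
        _ = (b : ℝ) ^ c0 := by field_simp
    have hb0 : (1 : ℝ) ≤ (b : ℝ) ^ c0 := Real.one_le_rpow hb1 hc0nn
    have hd1' : (0 : ℝ) ≤ (d : ℝ) - 1 := by linarith
    have h5 : ((d : ℝ) - 1) * F a ≤ ((d : ℝ) - 1) * ((b : ℝ) ^ c0) :=
      mul_le_mul_of_nonneg_left h1 hd1'
    have hFb : F b = (d : ℝ) * (b : ℝ) ^ c0 := rfl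
    rw [hFb]
    linarith
  refine ⟨d, c0 + 1, hdpos, by linarith, ?_⟩
  intro V iV G hyp α β
  obtain ⟨p, hp⟩ := BP.main d k hd hk ε hε F hF0 hFmono hFkey
    (Fintype.card V) V iV G le_rfl hyp α β
  refine ⟨p, ?_⟩
  have hlen : (p.length : ℝ) = ∑ v, (recolorCount v p : ℝ) := by
    rw [BP.length_eq_sum_rc p]
    push_cast
    rfl
  rcases Nat.eq_zero_or_pos (Fintype.card V) with h0 | hpos
  · haveI : IsEmpty V := Fintype.card_eq_zero_iff.mp h0
    have hl0 : (p.length : ℝ) = 0 := by rw [hlen]; simp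
    rw [hl0, h0]
    rw [Nat.cast_zero, Real.zero_rpow (by linarith : c0 + 1 ≠ 0)]
    simp
  · have hcast : (0 : ℝ) < (Fintype.card V : ℝ) := by exact_mod_cast hpos
    calc (p.length : ℝ) = ∑ v, (recolorCount v p : ℝ) := hlen
      _ ≤ ∑ _v : V, F (Fintype.card V) := Finset.sum_le_sum (fun v _ => hp v)
      _ = (Fintype.card V : ℝ) * F (Fintype.card V) := by
          rw [Finset.sum_const, Finset.card_univ, nsmul_eq_mul]
      _ = (d : ℝ) * (Fintype.card V : ℝ) ^ (c0 + 1) := by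
          rw [Real.rpow_add_one (ne_of_gt hcast)]
          show (Fintype.card V : ℝ) * ((d : ℝ) * (Fintype.card V : ℝ) ^ c0) = _
          ring
end

section
/- Let G be a finite graph with maximum average degree at most d - ε (d a positive integer, 0 < ε ≤ d²). Then there is a partition V(G) = I₁ ∪ I₂ ∪ … ∪ I_m with m = O(log n) (n = |V(G)|), where each I_j is an independent set in the graph G - (I₁ ∪ … ∪ I_{j-1}) consisting of vertices of degree at most d - 1 in that graph, and |I_j| ≥ (ε/d²)·|V(G - (I₁ ∪ … ∪ I_{j-1}))|. -/
lemma greedy {V : Type} [Fintype V] [DecidableEq V] (G : SimpleGraph V)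
    [DecidableRel G.Adj] (d : ℕ) (hd : 0 < d) :
    ∀ S : Finset V, (∀ v ∈ S, (G.neighborFinset v ∩ S).card ≤ d - 1) →
      ∃ T ⊆ S, (∀ u ∈ T, ∀ v ∈ T, ¬ G.Adj u v) ∧ S.card ≤ d * T.card := by
  intro S
  induction S using Finset.strongInduction with
  | _ S ih =>
    intro hdeg
    rcases S.eq_empty_or_nonempty with rfl | ⟨v, hv⟩
    · exact ⟨∅, by simp⟩
    · set S' : Finset V := S \ insert v (G.neighborFinset v) with hS'
      have hsub : S' ⊂ S := by
        refine (Finset.ssubset_iff_of_subset Finset.sdiff_subset).mpr ⟨v, hv, by simp [hS']⟩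
      have hdeg' : ∀ u ∈ S', (G.neighborFinset u ∩ S').card ≤ d - 1 := by
        intro u hu
        refine le_trans (Finset.card_le_card ?_) (hdeg u (Finset.mem_sdiff.mp hu).1)
        exact Finset.inter_subset_inter le_rfl (Finset.sdiff_subset)
      obtain ⟨T', hT'sub, hT'indep, hT'card⟩ := ih S' hsub hdeg'
      refine ⟨insert v T', ?_, ?_, ?_⟩
      · refine Finset.insert_subset hv (hT'sub.trans Finset.sdiff_subset)
      · have hvnot : ∀ u ∈ T', ¬ G.Adj v u := by
          intro u hu hadj
          have := hT'sub hu
          rw [hS', Finset.mem_sdiff] at this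
          exact this.2 (by simp [hadj])
        intro u hu w hw hadj
        rcases Finset.mem_insert.mp hu with h | hu2
        · rcases Finset.mem_insert.mp hw with h' | hw2
          · subst h; subst h'; exact G.loopless.irrefl _ hadj
          · subst h; exact hvnot w hw2 hadj
        · rcases Finset.mem_insert.mp hw with h' | hw2
          · subst h'; exact hvnot u hu2 hadj.symm
          · exact hT'indep u hu2 w hw2 hadj
      · have hvT' : v ∉ T' := by
          intro h; have := hT'sub h; rw [hS', Finset.mem_sdiff] at this; simp at this
        rw [Finset.card_insert_of_notMem hvT']
        have hcover : S ⊆ S' ∪ insert v (G.neighborFinset v ∩ S) := by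
          intro u hu
          by_cases h : u ∈ insert v (G.neighborFinset v)
          · rcases Finset.mem_insert.mp h with rfl | h
            · exact Finset.mem_union_right _ (Finset.mem_insert_self _ _)
            · exact Finset.mem_union_right _ (Finset.mem_insert_of_mem
                (Finset.mem_inter.mpr ⟨h, hu⟩))
          · exact Finset.mem_union_left _ (Finset.mem_sdiff.mpr ⟨hu, h⟩)
        have h1 : S.card ≤ S'.card + d := by
          calc S.card ≤ (S' ∪ insert v (G.neighborFinset v ∩ S)).card :=
                Finset.card_le_card hcover
            _ ≤ S'.card + (insert v (G.neighborFinset v ∩ S)).card :=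
                Finset.card_union_le _ _
            _ ≤ S'.card + (1 + (d - 1)) := by
                gcongr
                exact (Finset.card_insert_le _ _).trans
                  (by have := hdeg v hv; omega)
            _ = S'.card + d := by omega
        calc S.card ≤ S'.card + d := h1
          _ ≤ d * T'.card + d := by omega
          _ = d * (T'.card + 1) := by ring

lemma step {V : Type} [Fintype V] [DecidableEq V] (G : SimpleGraph V)
    [DecidableRel G.Adj] (d : ℕ) (hd : 0 < d) (ε : ℝ) (hε : 0 < ε)
    (hmad : ∀ H : G.Subgraph, H.verts.Nonempty →
      2 * (H.edgeSet.ncard : ℝ) ≤ ((d : ℝ) - ε) * H.verts.ncard)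
    (R : Finset V) (hR : R.Nonempty) :
    ∃ T : Finset V, T ⊆ R ∧ T.Nonempty ∧ (∀ u ∈ T, ∀ v ∈ T, ¬ G.Adj u v) ∧
      (∀ v ∈ T, (G.neighborFinset v ∩ R).card ≤ d - 1) ∧
      ε / (d : ℝ) ^ 2 * R.card ≤ (T.card : ℝ) := by
  classical
  set G' : SimpleGraph V :=
    { Adj := fun u v => G.Adj u v ∧ u ∈ R ∧ v ∈ R
      symm := ⟨fun u v h => ⟨h.1.symm, h.2.2, h.2.1⟩⟩
      loopless := ⟨fun u h => G.loopless.irrefl u h.1⟩ } with hG'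
  haveI : DecidableRel G'.Adj := fun u v =>
    inferInstanceAs (Decidable (G.Adj u v ∧ u ∈ R ∧ v ∈ R))
  set H : G.Subgraph :=
    { verts := ↑R
      Adj := G'.Adj
      adj_sub := fun h => h.1
      edge_vert := fun h => h.2.1
      symm := G'.symm } with hH
  have hedge : H.edgeSet = G'.edgeSet := by
    ext e
    induction e with
    | h u v => simp [hH, SimpleGraph.Subgraph.mem_edgeSet, SimpleGraph.mem_edgeSet]
  have hnc : (H.edgeSet.ncard : ℕ) = G'.edgeFinset.card := by
    rw [hedge, Set.ncard_eq_toFinset_card', SimpleGraph.edgeFinset]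
  have hverts : H.verts.ncard = R.card := by
    simp [hH, Set.ncard_coe_finset]
  have hmadH := hmad H (by simpa [hH] using hR)
  rw [hverts] at hmadH
  have hdeg0 : ∀ v, v ∉ R → G'.degree v = 0 := by
    intro v hv
    rw [← SimpleGraph.card_neighborFinset_eq_degree]
    refine Finset.card_eq_zero.mpr ?_
    ext u; simp only [SimpleGraph.mem_neighborFinset, Finset.notMem_empty, iff_false, hG']
    intro h; exact hv h.2.1
  have hdegR : ∀ v ∈ R, G'.degree v = (G.neighborFinset v ∩ R).card := by
    intro v hv
    rw [← SimpleGraph.card_neighborFinset_eq_degree]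
    congr 1
    ext u
    simp only [SimpleGraph.mem_neighborFinset, Finset.mem_inter, hG']
    tauto
  have hsum : ∑ v ∈ R, (G.neighborFinset v ∩ R).card = 2 * G'.edgeFinset.card := by
    rw [← SimpleGraph.sum_degrees_eq_twice_card_edges]
    rw [← Finset.sum_subset (Finset.subset_univ R) (fun v _ hv => hdeg0 v hv)]
    exact Finset.sum_congr rfl fun v hv => (hdegR v hv).symm
  set S : Finset V := R.filter (fun v => (G.neighborFinset v ∩ R).card ≤ d - 1) with hS
  have hSsub : S ⊆ R := Finset.filter_subset _ _
  have hlow : d * (R \ S).card ≤ ∑ v ∈ R, (G.neighborFinset v ∩ R).card := by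
    calc d * (R \ S).card = ∑ _v ∈ R \ S, d := by
          rw [Finset.sum_const, smul_eq_mul, mul_comm]
      _ ≤ ∑ v ∈ R \ S, (G.neighborFinset v ∩ R).card := by
          refine Finset.sum_le_sum ?_
          intro v hv
          rw [Finset.mem_sdiff, hS, Finset.mem_filter] at hv
          have h2 : ¬ ((G.neighborFinset v ∩ R).card ≤ d - 1) := fun hle => hv.2 ⟨hv.1, hle⟩
          omega
      _ ≤ ∑ v ∈ R, (G.neighborFinset v ∩ R).card :=
          Finset.sum_le_sum_of_subset Finset.sdiff_subset
  have hcard_sdiff : (R \ S).card = R.card - S.card := Finset.card_sdiff_of_subset hSsub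
  have hεS : ε * R.card ≤ (d : ℝ) * S.card := by
    have h1 : (d : ℝ) * ((R.card : ℝ) - S.card) ≤ 2 * (G'.edgeFinset.card : ℝ) := by
      have h3 := hlow
      rw [hcard_sdiff, hsum] at h3
      have hc := Finset.card_le_card hSsub
      have h4 : ((d * (R.card - S.card) : ℕ) : ℝ) ≤ ((2 * G'.edgeFinset.card : ℕ) : ℝ) :=
        Nat.cast_le.mpr h3
      push_cast [Nat.cast_sub hc] at h4
      linarith
    rw [hnc] at hmadH
    push_cast at hmadH
    linarith
  have hSdeg : ∀ v ∈ S, (G.neighborFinset v ∩ S).card ≤ d - 1 := by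
    intro v hv
    rw [hS, Finset.mem_filter] at hv
    refine le_trans (Finset.card_le_card ?_) hv.2
    exact Finset.inter_subset_inter le_rfl hSsub
  obtain ⟨T, hTS, hTindep, hTcard⟩ := greedy G d hd S hSdeg
  · have hd2 : (0 : ℝ) < (d : ℝ) ^ 2 := by positivity
    have h2 : (S.card : ℝ) ≤ d * T.card := by exact_mod_cast hTcard
    have hsize : ε / (d : ℝ) ^ 2 * R.card ≤ (T.card : ℝ) := by
      rw [div_mul_eq_mul_div, div_le_iff₀ hd2]
      nlinarith
    refine ⟨T, hTS.trans hSsub, ?_, hTindep, ?_, hsize⟩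
    · rw [← Finset.card_pos]
      by_contra h
      push_neg at h
      have hT0 : (T.card : ℝ) = 0 := by exact_mod_cast Nat.le_zero.mp (by omega)
      have hR1 : (1 : ℝ) ≤ R.card := by exact_mod_cast hR.card_pos
      have hRp : (0 : ℝ) < ε / (d : ℝ) ^ 2 * R.card := by positivity
      linarith
    · intro v hv
      have := hTS hv
      rw [hS, Finset.mem_filter] at this
      exact this.2

lemma recur {V : Type} [Fintype V] [DecidableEq V] (G : SimpleGraph V)
    [DecidableRel G.Adj] (d : ℕ) (hd : 0 < d) (ε : ℝ) (hε : 0 < ε) (hεd : ε ≤ (d : ℝ) ^ 2)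
    (hmad : ∀ H : G.Subgraph, H.verts.Nonempty →
      2 * (H.edgeSet.ncard : ℝ) ≤ ((d : ℝ) - ε) * H.verts.ncard) :
    ∀ n : ℕ, ∀ R : Finset V, R.card ≤ n →
    ∃ (m : ℕ) (I : Fin m → Finset V),
      (∀ i j : Fin m, i ≠ j → Disjoint (I i) (I j)) ∧
      (Finset.univ.biUnion I = R) ∧
      (m = 0 ∨ (1 : ℝ) ≤ (1 - ε / (d : ℝ) ^ 2) ^ (m - 1) * R.card) ∧
      ∀ j : Fin m,
        I j ⊆ R \ ((Finset.univ.filter (fun i : Fin m => i < j)).biUnion I) ∧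
        (∀ u ∈ I j, ∀ v ∈ I j, ¬ G.Adj u v) ∧
        (∀ v ∈ I j, (G.neighborFinset v ∩
          (R \ ((Finset.univ.filter (fun i : Fin m => i < j)).biUnion I))).card ≤ d - 1) ∧
        ε / (d : ℝ) ^ 2 *
          ((R \ ((Finset.univ.filter (fun i : Fin m => i < j)).biUnion I)).card : ℝ)
          ≤ ((I j).card : ℝ) := by
  intro n
  induction n with
  | zero =>
    intro R hR
    have : R = ∅ := Finset.card_eq_zero.mp (Nat.le_zero.mp hR)
    subst this
    exact ⟨0, Fin.elim0, fun i => i.elim0, by simp, Or.inl rfl, fun j => j.elim0⟩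
  | succ n ih =>
    intro R hR
    rcases R.eq_empty_or_nonempty with rfl | hRne
    · exact ⟨0, Fin.elim0, fun i => i.elim0, by simp, Or.inl rfl, fun j => j.elim0⟩
    obtain ⟨T, hTR, hTne, hTindep, hTdeg, hTsize⟩ := step G d hd ε hε hmad R hRne
    set R' : Finset V := R \ T with hR'
    have hR'card : R'.card ≤ n := by
      have h1 : R'.card = R.card - T.card := Finset.card_sdiff_of_subset hTR
      have h2 : 1 ≤ T.card := Finset.card_pos.mpr hTne
      omega
    obtain ⟨m', I', hdisj', hbi', hbound', hstep'⟩ := ih R' hR'card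
    have hI'R' : ∀ i, I' i ⊆ R' := by
      intro i
      rw [← hbi']
      exact Finset.subset_biUnion_of_mem I' (Finset.mem_univ i)
    set δ : ℝ := ε / (d : ℝ) ^ 2 with hδ
    have hd2 : (0 : ℝ) < (d : ℝ) ^ 2 := by positivity
    have hδ1 : δ ≤ 1 := by rw [hδ, div_le_one hd2]; exact hεd
    refine ⟨m' + 1, Fin.cons T I', ?_, ?_, ?_, ?_⟩
    · intro i j hne
      induction i using Fin.cases with
      | zero =>
        induction j using Fin.cases with
        | zero => exact absurd rfl hne
        | succ j' =>
          rw [Fin.cons_zero, Fin.cons_succ]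
          rw [Finset.disjoint_left]
          intro x hx hx'
          exact (Finset.mem_sdiff.mp (hI'R' j' hx')).2 hx
      | succ i' =>
        induction j using Fin.cases with
        | zero =>
          rw [Fin.cons_zero, Fin.cons_succ]
          rw [Finset.disjoint_left]
          intro x hx hx'
          exact (Finset.mem_sdiff.mp (hI'R' i' hx)).2 hx'
        | succ j' =>
          rw [Fin.cons_succ, Fin.cons_succ]
          exact hdisj' i' j' (fun h => hne (by rw [h]))
    · ext x
      simp only [Finset.mem_biUnion, Finset.mem_univ, true_and]
      rw [Fin.exists_fin_succ]
      simp only [Fin.cons_zero, Fin.cons_succ]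
      have h1 : (∃ i, x ∈ I' i) ↔ x ∈ R' := by
        rw [← hbi']; simp [Finset.mem_biUnion]
      rw [h1, hR', Finset.mem_sdiff]
      constructor
      · rintro (h | ⟨h, _⟩)
        · exact hTR h
        · exact h
      · intro h
        by_cases hx : x ∈ T
        · exact Or.inl hx
        · exact Or.inr ⟨h, hx⟩
    · right
      rcases Nat.eq_zero_or_pos m' with rfl | hm'
      · simp only [Nat.add_sub_cancel, pow_zero, one_mul]
        exact_mod_cast hRne.card_pos
      · have hb := hbound'.resolve_left (by omega)
        have hδd : 0 ≤ 1 - δ := by linarith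
        have hR'c : (R'.card : ℝ) ≤ (1 - δ) * R.card := by
          have h1 : R'.card = R.card - T.card := Finset.card_sdiff_of_subset hTR
          have h2 : ((R'.card : ℝ)) = (R.card : ℝ) - T.card := by
            rw [h1, Nat.cast_sub (Finset.card_le_card hTR)]
          rw [h2]
          have := hTsize
          linarith
        have hpow : (0 : ℝ) ≤ (1 - δ) ^ (m' - 1) := pow_nonneg hδd _
        calc (1 : ℝ) ≤ (1 - δ) ^ (m' - 1) * R'.card := hb
          _ ≤ (1 - δ) ^ (m' - 1) * ((1 - δ) * R.card) := by
              refine mul_le_mul_of_nonneg_left hR'c hpow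
          _ = (1 - δ) ^ (m' - 1 + 1) * R.card := by ring
          _ = (1 - δ) ^ (m' + 1 - 1) * R.card := by congr 2; omega
    · intro j
      induction j using Fin.cases with
      | zero =>
        have hfilter : (Finset.univ.filter
            (fun i : Fin (m' + 1) => i < (0 : Fin (m' + 1)))) = ∅ := by
          ext i; simp [Fin.not_lt_zero]
        rw [hfilter]
        simp only [Finset.biUnion_empty, Finset.sdiff_empty, Fin.cons_zero]
        exact ⟨hTR, hTindep, hTdeg, hTsize⟩
      | succ j' =>
        have hprefix : R \ ((Finset.univ.filter
              (fun i : Fin (m' + 1) => i < j'.succ)).biUnion (Fin.cons T I'))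
            = R' \ ((Finset.univ.filter (fun i : Fin m' => i < j')).biUnion I') := by
          ext x
          simp only [Finset.mem_sdiff, Finset.mem_biUnion, Finset.mem_filter,
            Finset.mem_univ, true_and, hR']
          have key : (∃ i : Fin (m' + 1), i < j'.succ ∧ x ∈ (Fin.cons T I' : Fin (m' + 1) → Finset V) i) ↔
              (x ∈ T ∨ ∃ i : Fin m', i < j' ∧ x ∈ I' i) := by
            rw [Fin.exists_fin_succ]
            simp only [Fin.cons_zero, Fin.cons_succ, Fin.succ_lt_succ_iff]
            have h0 : (0 : Fin (m' + 1)) < j'.succ := j'.succ_pos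
            tauto
          rw [key]
          constructor
          · rintro ⟨hxR, hn⟩
            exact ⟨⟨hxR, fun ht => hn (Or.inl ht)⟩, fun he => hn (Or.inr he)⟩
          · rintro ⟨⟨hxR, hxT⟩, hn⟩
            refine ⟨hxR, ?_⟩
            rintro (h | h)
            exacts [hxT h, hn h]
        rw [hprefix, Fin.cons_succ]
        exact hstep' j'

/-- Let `d` be a positive integer and `0 < ε ≤ d²`. There is a constant
`C = C(d, ε)` such that every finite graph `G` with maximum average degree at most
`d - ε` admits a partition `V(G) = I₁ ∪ … ∪ I_m` with `m = O(log n)`, where each `I_j` is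
an independent set of the graph `G - (I₁ ∪ … ∪ I_{j-1})` consisting of vertices of degree
at most `d - 1` in that graph, with `|I_j| ≥ (ε/d²)·|V(G - (I₁ ∪ … ∪ I_{j-1}))|`. -/
theorem stmt10 (d : ℕ) (hd : 0 < d) (ε : ℝ) (hε : 0 < ε) (hεd : ε ≤ (d : ℝ) ^ 2) :
    ∃ C : ℝ, 0 < C ∧
      ∀ (V : Type) (_ : Fintype V) (_ : DecidableEq V) (G : SimpleGraph V)
        (_ : DecidableRel G.Adj),
        (∀ H : G.Subgraph, H.verts.Nonempty →
          2 * (H.edgeSet.ncard : ℝ) ≤ ((d : ℝ) - ε) * H.verts.ncard) →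
        ∃ (m : ℕ) (I : Fin m → Finset V),
          (∀ i j : Fin m, i ≠ j → Disjoint (I i) (I j)) ∧
          (Finset.univ.biUnion I = Finset.univ) ∧
          (m : ℝ) ≤ C * (Real.log (Fintype.card V) + 1) ∧
          ∀ j : Fin m,
            -- `R` is the vertex set of the graph `G - (I₁ ∪ … ∪ I_{j-1})`
            let R : Finset V :=
              Finset.univ \ ((Finset.univ.filter (fun i : Fin m => i < j)).biUnion I)
            I j ⊆ R ∧
            (∀ u ∈ I j, ∀ v ∈ I j, ¬ G.Adj u v) ∧
            (∀ v ∈ I j, (G.neighborFinset v ∩ R).card ≤ d - 1) ∧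
            ε / (d : ℝ) ^ 2 * (R.card : ℝ) ≤ ((I j).card : ℝ) := by
  have hd2 : (0 : ℝ) < (d : ℝ) ^ 2 := by positivity
  refine ⟨(d : ℝ) ^ 2 / ε, by positivity, ?_⟩
  intro V _ _ G _ hmad
  obtain ⟨m, I, hdisj, hbi, hbound, hstep⟩ :=
    recur G d hd ε hε hεd hmad Finset.univ.card Finset.univ le_rfl
  refine ⟨m, I, hdisj, hbi, ?_, hstep⟩
  rw [Finset.card_univ] at hbound
  set N : ℝ := (Fintype.card V : ℝ) with hN
  set δ : ℝ := ε / (d : ℝ) ^ 2 with hδ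
  have hδpos : 0 < δ := by positivity
  have hδ1 : δ ≤ 1 := by rw [hδ, div_le_one hd2]; exact hεd
  have hδd : 0 ≤ 1 - δ := by linarith
  have hC1 : (1 : ℝ) ≤ (d : ℝ) ^ 2 / ε := (one_le_div hε).mpr hεd
  have hlogN0 : 0 ≤ Real.log N := by
    rcases Nat.eq_zero_or_pos (Fintype.card V) with h | h
    · simp [hN, h]
    · exact Real.log_nonneg (by rw [hN]; exact_mod_cast h)
  rcases hbound with rfl | hb
  · simp only [Nat.cast_zero]
    have : (0 : ℝ) < (d : ℝ) ^ 2 / ε := by positivity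
    nlinarith
  · match m, hb with
    | 0, hb =>
      simp only [Nat.cast_zero]
      have : (0 : ℝ) < (d : ℝ) ^ 2 / ε := by positivity
      nlinarith
    | k + 1, hb =>
      have hb' : (1 : ℝ) ≤ (1 - δ) ^ k * N := by
        simpa using hb
      have hpow1 : (1 - δ) ^ k ≤ 1 := pow_le_one₀ hδd (by linarith)
      have hpow0 : (0 : ℝ) ≤ (1 - δ) ^ k := pow_nonneg hδd k
      have hN0 : (0 : ℝ) ≤ N := by positivity
      have hN1 : (1 : ℝ) ≤ N := by nlinarith
      have hkey : (k : ℝ) * δ ≤ Real.log N := by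
        rcases Nat.eq_zero_or_pos k with rfl | hk
        · simpa using hlogN0
        · have h1δpos : (0 : ℝ) < 1 - δ := by
            rcases lt_or_eq_of_le hδd with h | h
            · exact h
            · exfalso
              rw [← h] at hb'
              rw [zero_pow (by omega)] at hb'
              simp at hb'
              linarith
          have h2 : 0 ≤ Real.log ((1 - δ) ^ k * N) := Real.log_nonneg hb'
          rw [Real.log_mul (ne_of_gt (pow_pos h1δpos k)) (by linarith),
            Real.log_pow] at h2
          have h3 : Real.log (1 - δ) ≤ -δ := by
            have := Real.log_le_sub_one_of_pos h1δpos
            linarith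
          have h4 : (k : ℝ) * Real.log (1 - δ) ≤ (k : ℝ) * (-δ) :=
            mul_le_mul_of_nonneg_left h3 (Nat.cast_nonneg k)
          push_cast at h2
          linarith
      have h5 : (k : ℝ) * ε ≤ Real.log N * (d : ℝ) ^ 2 := by
        rw [hδ, ← mul_div_assoc] at hkey
        exact (div_le_iff₀ hd2).mp hkey
      rw [div_mul_eq_mul_div, le_div_iff₀ hε]
      push_cast
      nlinarith
end

section
/- Let G be a finite graph whose every nonempty subgraph H satisfies 2|E(H)| < d·|V(H)| for a positive integer d, and let k ≥ d + 1. Then every k-colouring of G can be transformed into every other k-colouring by a finite sequence of single-vertex recolourings through proper k-colourings. -/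
section Aux

open Finset

variable {V : Type*} (G : SimpleGraph V) (k : ℕ)

/-- A function is a proper colouring on the finset `s`. -/
def ProperOn (s : Finset V) (f : V → Fin k) : Prop :=
  ∀ ⦃u w : V⦄, u ∈ s → w ∈ s → G.Adj u w → f u ≠ f w

/-- One recolouring step: change the colour of one vertex of `s`, staying proper on `s`. -/
def StepOn (s : Finset V) (f g : V → Fin k) : Prop :=
  ProperOn G k s g ∧ ∃ w ∈ s, f w ≠ g w ∧ ∀ x, x ≠ w → f x = g x

/-- Reachability by recolouring steps on `s`. -/
abbrev ReachOn (s : Finset V) : (V → Fin k) → (V → Fin k) → Prop :=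
  Relation.ReflTransGen (StepOn G k s)

variable {G k}

lemma ProperOn.mono {s t : Finset V} {f : V → Fin k} (h : ProperOn G k t f) (hst : s ⊆ t) :
    ProperOn G k s f := fun _ _ hu hw hadj => h (hst hu) (hst hw) hadj

/-- In a graph satisfying the sparseness condition, every nonempty finset of vertices
contains a vertex with fewer than `d` neighbours inside the finset. -/
lemma exists_low_deg [Fintype V] [DecidableRel G.Adj] {d : ℕ}
    (hmad : ∀ H : G.Subgraph, H.verts.Nonempty →
      2 * (H.edgeSet.ncard : ℝ) < (d : ℝ) * H.verts.ncard)
    (s : Finset V) (hs : s.Nonempty) :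
    ∃ v ∈ s, {w ∈ s | G.Adj v w}.card < d := by
  classical
  by_contra hcon
  push_neg at hcon
  set H : G.Subgraph :=
    { verts := ↑s
      Adj := fun a b => G.Adj a b ∧ a ∈ s ∧ b ∈ s
      adj_sub := fun h => h.1
      edge_vert := fun h => h.2.1
      symm := ⟨fun a b h => ⟨h.1.symm, h.2.2, h.2.1⟩⟩ } with hHdef
  have hH := hmad H (by exact ⟨hs.choose, by simpa [hHdef] using hs.choose_spec⟩)
  have hverts : H.verts.ncard = s.card := by
    simp [hHdef, Set.ncard_coe_finset]
  rw [hverts] at hH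
  have hnat : 2 * H.edgeSet.ncard < d * s.card := by exact_mod_cast hH
  -- handshake on the coe graph
  have hcard : H.edgeSet.ncard = H.coe.edgeFinset.card := by
    rw [← SimpleGraph.Subgraph.image_coe_edgeSet_coe,
      Set.ncard_image_of_injective _ (Sym2.map.injective Subtype.val_injective),
      Set.ncard_eq_toFinset_card', SimpleGraph.edgeFinset]
  have hhs := SimpleGraph.sum_degrees_eq_twice_card_edges H.coe
  have hdeg : ∀ x : H.verts, d ≤ H.coe.degree x := by
    intro x
    have hx : (x : V) ∈ s := x.2
    have hcount : H.coe.degree x = {w ∈ s | G.Adj (x : V) w}.card := by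
      unfold SimpleGraph.degree
      apply Finset.card_bij (fun (y : H.verts) _ => (y : V))
      · intro y hy
        rw [SimpleGraph.mem_neighborFinset] at hy
        obtain ⟨h1, _, h3⟩ := hy
        exact Finset.mem_filter.mpr ⟨h3, h1⟩
      · intro a _ b _ hab
        exact Subtype.ext hab
      · intro w hw
        rw [Finset.mem_filter] at hw
        refine ⟨⟨w, by simpa [hHdef] using hw.1⟩, ?_, rfl⟩
        rw [SimpleGraph.mem_neighborFinset]
        exact ⟨hw.2, hx, hw.1⟩
    rw [hcount]
    exact hcon _ hx
  have hcardverts : Fintype.card H.verts = s.card := by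
    simp [hHdef]
  have hge : d * s.card ≤ 2 * H.edgeSet.ncard := by
    rw [hcard, ← hhs]
    calc d * s.card = ∑ _x : H.verts, d := by
          rw [Finset.sum_const, Finset.card_univ, hcardverts, smul_eq_mul, mul_comm]
      _ ≤ ∑ x : H.verts, H.coe.degree x := Finset.sum_le_sum fun x _ => hdeg x
  omega

/-- There is a colour distinct from `b` and from the colours of all `s`-neighbours of `v`. -/
lemma exists_free_color [DecidableEq V] [DecidableRel G.Adj]
    (h : V → Fin k) (v : V) (s : Finset V)
    (hdeg : {w ∈ s | G.Adj v w}.card + 1 < k) (b : Fin k) :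
    ∃ c : Fin k, c ≠ b ∧ ∀ x ∈ s, G.Adj v x → h x ≠ c := by
  classical
  set T : Finset (Fin k) := insert b ({w ∈ s | G.Adj v w}.image h) with hT
  have hTcard : T.card < Fintype.card (Fin k) := by
    have h1 := Finset.card_insert_le b ({w ∈ s | G.Adj v w}.image h)
    have h2 := Finset.card_image_le (s := {w ∈ s | G.Adj v w}) (f := h)
    rw [hT, Fintype.card_fin]
    omega
  have : ∃ c : Fin k, c ∉ T := by
    by_contra hc
    push_neg at hc
    have : T = Finset.univ := Finset.eq_univ_iff_forall.mpr hc
    rw [this, Finset.card_univ] at hTcard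
    omega
  obtain ⟨c, hc⟩ := this
  refine ⟨c, fun e => hc (e ▸ Finset.mem_insert_self b _), fun x hx hadj he => ?_⟩
  exact hc (he ▸ Finset.mem_insert_of_mem
    (Finset.mem_image_of_mem h (Finset.mem_filter.mpr ⟨hx, hadj⟩)))

/-- Lifting lemma: a reconfiguration sequence on `s.erase v` lifts to one on `s`,
provided `v` has few neighbours in `s`. -/
lemma lift_reach [DecidableEq V] [DecidableRel G.Adj] {s : Finset V} {v : V} (hv : v ∈ s)
    (hdeg : {w ∈ s | G.Adj v w}.card + 1 < k)
    {f g : V → Fin k} (hr : ReachOn G k (s.erase v) f g) (hf : ProperOn G k s f) :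
    ∃ h : V → Fin k, ReachOn G k s f h ∧ ProperOn G k s h ∧ ∀ x, x ≠ v → h x = g x := by
  induction hr with
  | refl => exact ⟨f, Relation.ReflTransGen.refl, hf, fun _ _ => rfl⟩
  | @tail g g₂ _ hstep ih =>
    obtain ⟨h, hrh, hph, hag⟩ := ih
    obtain ⟨hpg2, w, hw, hne, heq⟩ := hstep
    have hws : w ∈ s := Finset.mem_of_mem_erase hw
    have hwv : w ≠ v := Finset.ne_of_mem_erase hw
    have hhw : h w ≠ g₂ w := by rw [hag w hwv]; exact hne
    have hcompat : ∀ y, y ≠ v → y ≠ w → h y = g₂ y :=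
      fun y h1 h2 => (hag y h1).trans (heq y h2)
    by_cases hcase : G.Adj v w ∧ g₂ w = h v
    · -- v must be recoloured first
      obtain ⟨hadjvw, hgw⟩ := hcase
      obtain ⟨c, hcb, hcfree⟩ := exists_free_color h v s hdeg (g₂ w)
      set h₁ : V → Fin k := Function.update h v c with hh₁
      have hph₁ : ProperOn G k s h₁ := by
        intro u x hu hx hadj hux
        have hxu : u ≠ x := G.ne_of_adj hadj
        simp only [hh₁, Function.update_apply] at hux
        split_ifs at hux with h1 h2 h2
        · exact hxu (h1.trans h2.symm)
        · exact hcfree x hx (h1 ▸ hadj) hux.symm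
        · exact hcfree u hu (h2 ▸ hadj.symm) hux
        · exact hph hu hx hadj hux
      have hstep₁ : StepOn G k s h h₁ := by
        refine ⟨hph₁, v, hv, ?_, fun x hxv => (Function.update_of_ne hxv c h).symm⟩
        rw [hh₁, Function.update_self]
        intro e
        exact hcb (hgw ▸ e.symm)
      set h₂ : V → Fin k := Function.update h₁ w (g₂ w) with hh₂
      have hval : ∀ y, h₂ y = if y = w then g₂ w else if y = v then c else h y := by
        intro y
        simp only [hh₂, hh₁, Function.update_apply]
      have hph₂ : ProperOn G k s h₂ := by
        intro u x hu hx hadj hux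
        have hxu : u ≠ x := G.ne_of_adj hadj
        rw [hval u, hval x] at hux
        split_ifs at hux with a1 a2 a3 a4 a5 a6 a7 a8
        · exact hxu (a1.trans a2.symm)
        · exact hcb hux.symm
        · exact hpg2 hw (Finset.mem_erase.mpr ⟨a3, hx⟩) (a1 ▸ hadj)
            (hux.trans (hcompat x a3 a2))
        · exact hcb hux
        · exact hxu (a4.trans a6.symm)
        · exact hcfree x hx (a4 ▸ hadj) hux.symm
        · exact hpg2 (Finset.mem_erase.mpr ⟨a4, hu⟩) hw (a7 ▸ hadj)
            ((hcompat u a4 a1).symm.trans hux)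
        · exact hcfree u hu (a8 ▸ hadj.symm) hux
        · exact hph hu hx hadj hux
      have hstep₂ : StepOn G k s h₁ h₂ := by
        refine ⟨hph₂, w, hws, ?_, fun x hxw => (Function.update_of_ne hxw _ h₁).symm⟩
        rw [hh₂, Function.update_self, hh₁, Function.update_of_ne hwv]
        exact hhw
      refine ⟨h₂, (hrh.tail hstep₁).tail hstep₂, hph₂, fun x hxv => ?_⟩
      rw [hval x]
      rcases eq_or_ne x w with rfl | hxw
      · rw [if_pos rfl]
      · rw [if_neg hxw, if_neg hxv]
        exact hcompat x hxv hxw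
    · -- we can recolour w directly
      have hcase' : G.Adj v w → g₂ w ≠ h v := by
        intro h1 h2; exact hcase ⟨h1, h2⟩
      set h₂ : V → Fin k := Function.update h w (g₂ w) with hh₂
      have hval : ∀ y, h₂ y = if y = w then g₂ w else h y := fun y =>
        Function.update_apply h w (g₂ w) y
      have hph₂ : ProperOn G k s h₂ := by
        intro u x hu hx hadj hux
        have hxu : u ≠ x := G.ne_of_adj hadj
        rw [hval u, hval x] at hux
        split_ifs at hux with h1 h2 h2
        · exact hxu (h1.trans h2.symm)
        · rcases eq_or_ne x v with rfl | hxv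
          · exact hcase' (h1 ▸ hadj.symm) hux
          · exact hpg2 hw (Finset.mem_erase.mpr ⟨hxv, hx⟩) (h1 ▸ hadj)
              (hux.trans (hcompat x hxv h2))
        · rcases eq_or_ne u v with rfl | huv
          · exact hcase' (h2 ▸ hadj) hux.symm
          · exact hpg2 (Finset.mem_erase.mpr ⟨huv, hu⟩) hw (h2 ▸ hadj)
              ((hcompat u huv h1).symm.trans hux)
        · exact hph hu hx hadj hux
      have hstep₂ : StepOn G k s h h₂ := by
        refine ⟨hph₂, w, hws, ?_, fun x hxw => (Function.update_of_ne hxw _ h).symm⟩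
        rw [hh₂, Function.update_self]
        exact hhw
      refine ⟨h₂, hrh.tail hstep₂, hph₂, fun x hxv => ?_⟩
      rw [hval x]
      rcases eq_or_ne x w with rfl | hxw
      · rw [if_pos rfl]
      · rw [if_neg hxw]
        exact hcompat x hxv hxw

/-- Main induction: any two colourings proper on `s`, agreeing off `s`,
are connected by recolouring steps on `s`. -/
lemma main_reach [Fintype V] [DecidableEq V] [DecidableRel G.Adj] {d : ℕ} (hk : d + 1 ≤ k)
    (hmad : ∀ H : G.Subgraph, H.verts.Nonempty →
      2 * (H.edgeSet.ncard : ℝ) < (d : ℝ) * H.verts.ncard) :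
    ∀ n (s : Finset V), s.card = n → ∀ f g : V → Fin k, ProperOn G k s f → ProperOn G k s g →
      (∀ x, x ∉ s → f x = g x) → ReachOn G k s f g := by
  intro n
  induction n using Nat.strong_induction_on with
  | _ n ih =>
    intro s hsn f g hpf hpg hfg
    rcases s.eq_empty_or_nonempty with rfl | hs
    · have : f = g := funext fun x => hfg x (Finset.notMem_empty x)
      rw [this]
    · obtain ⟨v, hv, hvdeg⟩ := exists_low_deg hmad s hs
      have hdeg : {w ∈ s | G.Adj v w}.card + 1 < k := by omega
      have hcard : (s.erase v).card < n := by
        rw [← hsn]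
        exact Finset.card_erase_lt_of_mem hv
      set g' : V → Fin k := Function.update g v (f v) with hg'
      have hg'erase : ∀ y ∈ s.erase v, g' y = g y := fun y hy =>
        Function.update_of_ne (Finset.ne_of_mem_erase hy) _ g
      have hpg' : ProperOn G k (s.erase v) g' := by
        intro u x hu hx hadj
        rw [hg'erase u hu, hg'erase x hx]
        exact hpg (Finset.mem_of_mem_erase hu) (Finset.mem_of_mem_erase hx) hadj
      have hagree : ∀ x, x ∉ s.erase v → f x = g' x := by
        intro x hx
        rcases eq_or_ne x v with rfl | hxv
        · rw [hg', Function.update_self]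
        · rw [hg', Function.update_of_ne hxv]
          exact hfg x fun hxs => hx (Finset.mem_erase.mpr ⟨hxv, hxs⟩)
      have hreach' : ReachOn G k (s.erase v) f g' :=
        ih _ hcard (s.erase v) rfl f g' (hpf.mono (Finset.erase_subset v s)) hpg' hagree
      obtain ⟨h, hr, hph, hag⟩ := lift_reach hv hdeg hreach' hpf
      have hhg : ∀ x, x ≠ v → h x = g x := by
        intro x hxv
        rw [hag x hxv, hg', Function.update_of_ne hxv]
      rcases eq_or_ne (h v) (g v) with hveq | hvne
      · have : h = g := funext fun x => by
          rcases eq_or_ne x v with rfl | hxv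
          · exact hveq
          · exact hhg x hxv
        rwa [this] at hr
      · exact hr.tail ⟨hpg, v, hv, hvne, fun x hxv => hhg x hxv⟩

end Aux

/-- Let `G` be a finite graph whose every nonempty subgraph `H`
satisfies `2|E(H)| < d·|V(H)|` for a positive integer `d`, and let `k ≥ d + 1`. Then
every `k`-colouring of `G` can be transformed into every other by a finite sequence of
single-vertex recolourings through proper `k`-colourings. -/
theorem stmt14 {V : Type*} [Fintype V] (G : SimpleGraph V)
    (d k : ℕ) (hd : 0 < d) (hk : d + 1 ≤ k)
    (hmad : ∀ H : G.Subgraph, H.verts.Nonempty →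
      2 * (H.edgeSet.ncard : ℝ) < (d : ℝ) * H.verts.ncard) :
    ∀ α β : PropColoring G k, (ReconfGraph G k).Reachable α β := by
  classical
  intro α β
  have hα : ProperOn G k Finset.univ α.1 := fun u w _ _ hadj => α.2 u w hadj
  have hβ : ProperOn G k Finset.univ β.1 := fun u w _ _ hadj => β.2 u w hadj
  have hreach : ReachOn G k Finset.univ α.1 β.1 :=
    main_reach hk hmad _ Finset.univ rfl α.1 β.1 hα hβ
      (fun x hx => absurd (Finset.mem_univ x) hx)
  -- transfer to the reconfiguration graph
  suffices H : ∀ g : V → Fin k, ReachOn G k Finset.univ α.1 g →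
      ∃ hg : ∀ u v, G.Adj u v → g u ≠ g v, (ReconfGraph G k).Reachable α ⟨g, hg⟩ by
    obtain ⟨hg, hR⟩ := H β.1 hreach
    have : (⟨β.1, hg⟩ : PropColoring G k) = β := Subtype.ext rfl
    rwa [this] at hR
  intro g hg
  induction hg with
  | refl => exact ⟨α.2, by rw [show (⟨α.1, α.2⟩ : PropColoring G k) = α from rfl]⟩
  | @tail g g₂ _ hstep ih =>
    obtain ⟨hg, hR⟩ := ih
    obtain ⟨hpg2, w, _, hne, heq⟩ := hstep
    refine ⟨fun u v hadj => hpg2 (Finset.mem_univ u) (Finset.mem_univ v) hadj, ?_⟩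
    exact hR.trans (SimpleGraph.Adj.reachable ⟨w, hne, heq⟩)
end
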